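/- Fix τ ∈ K, char K = 0. The formal power series ω(x) = Σ_{n≥1} (∏_{a=0}^{n-2}(nτ+a)/n!) x^n satisfies ω(x)·(1-ω(x))^τ = x in K[[x]], where (1-ω)^τ is defined by the binomial series Σ_{r≥0} binom(τ,r)(-ω)^r. -/

import Mathlib

open PowerSeries Finset

variable {K : Type*} [Field K]

/-- The binomial series `(1-x)^τ = ∑_{r≥0} binom(τ,r)(-x)^r`. -/
noncomputable def oneSubPow [CharZero K] (τ : K) : PowerSeries K :=
  PowerSeries.mk fun r => ((-1 : K) ^ r * ∏ a ∈ Finset.range r, (τ - a)) / (r.factorial : K)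

/-- The series `ω(x) = ∑_{n≥1} (∏_{a=0}^{n-2}(nτ+a)/n!) x^n`. -/
noncomputable def omegaSeries [CharZero K] (τ : K) : PowerSeries K :=
  PowerSeries.mk fun n =>
    if n = 0 then 0 else (∏ a ∈ Finset.range (n - 1), ((n : K) * τ + a)) / (n.factorial : K)

/-- The composition `A ∘ u` of formal power series, expressed coefficientwise
(this is the usual composition when `u` has zero constant term, since then
`[x^n](u^i) = 0` for `i > n`). -/
noncomputable def seriesComp (A u : PowerSeries K) : PowerSeries K :=
  PowerSeries.mk fun n =>
    ∑ i ∈ Finset.range (n + 1), PowerSeries.coeff i A * PowerSeries.coeff n (u ^ i)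

namespace LagAux

lemma coeff_comp (A u : PowerSeries K) (n : ℕ) :
    coeff n (seriesComp A u) = ∑ i ∈ range (n + 1), coeff i A * coeff n (u ^ i) := by
  simp [seriesComp]

lemma coeff_pow_eq_zero {u : PowerSeries K} (hu : constantCoeff u = 0) {i n : ℕ} (h : n < i) :
    coeff n (u ^ i) = 0 := by
  have : X ^ i ∣ u ^ i := pow_dvd_pow_of_dvd (X_dvd_iff.mpr hu) i
  exact (X_pow_dvd_iff.mp this) n h

lemma coeff_self_pow {u : PowerSeries K} (hu : constantCoeff u = 0) (n : ℕ) :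
    coeff n (u ^ n) = (coeff 1 u) ^ n := by
  obtain ⟨v, rfl⟩ := X_dvd_iff.mpr hu
  rw [mul_pow]
  have h1 : coeff 1 (X * v) = constantCoeff v := by
    simpa using coeff_succ_X_mul 0 v
  have h2 : coeff n (X ^ n * v ^ n) = coeff 0 (v ^ n) := by
    simpa using coeff_X_pow_mul (v ^ n) n 0
  rw [h2, h1, coeff_zero_eq_constantCoeff, map_pow]

lemma coeff_comp_ext {u : PowerSeries K} (hu : constantCoeff u = 0) (A : PowerSeries K)
    {n N : ℕ} (h : n < N) :
    coeff n (seriesComp A u) = ∑ i ∈ range N, coeff i A * coeff n (u ^ i) := by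
  rw [coeff_comp]
  apply Finset.sum_subset
  · intro x hx
    simp only [Finset.mem_range] at hx ⊢
    omega
  · intro i hi hni
    simp only [Finset.mem_range] at hi hni
    rw [coeff_pow_eq_zero hu (by omega), mul_zero]

lemma biUnion_antidiagonal (n : ℕ) :
    (range (n+1)).biUnion (fun i => antidiagonal i)
      = (range (n+1) ×ˢ range (n+1)).filter (fun pq => pq.1 + pq.2 ≤ n) := by
  ext ⟨p, q⟩
  simp only [Finset.mem_biUnion, Finset.mem_range, Finset.HasAntidiagonal.mem_antidiagonal,
    Finset.mem_filter, Finset.mem_product]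
  constructor
  · rintro ⟨i, hi, he⟩; omega
  · rintro ⟨⟨_, _⟩, h⟩; exact ⟨p + q, by omega, rfl⟩

lemma sum_antidiagonal_swap (n : ℕ) (F : ℕ → ℕ → K) (hF : ∀ p q, n < p + q → F p q = 0) :
    ∑ i ∈ range (n+1), ∑ pq ∈ antidiagonal i, F pq.1 pq.2
      = ∑ p ∈ range (n+1), ∑ q ∈ range (n+1), F p q := by
  rw [← Finset.sum_biUnion, biUnion_antidiagonal]
  · rw [← Finset.sum_product']
    apply Finset.sum_subset
    · exact Finset.filter_subset _ _
    · intro pq hpq hpq2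
      simp only [Finset.mem_filter, Finset.mem_product, Finset.mem_range, not_and, not_le]
        at hpq2 hpq
      exact hF pq.1 pq.2 (hpq2 hpq)
  · intro a _ b _ hab
    simp only [Function.onFun, Finset.disjoint_left]
    intro pq h1 h2
    simp only [Finset.HasAntidiagonal.mem_antidiagonal] at h1 h2
    exact hab (h1 ▸ h2 ▸ rfl)


lemma comp_mul {u : PowerSeries K} (hu : constantCoeff u = 0) (A B : PowerSeries K) :
    seriesComp (A * B) u = seriesComp A u * seriesComp B u := by
  ext n
  rw [coeff_mul, coeff_comp]
  have hrhs : ∀ kl ∈ antidiagonal n,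
      coeff kl.1 (seriesComp A u) * coeff kl.2 (seriesComp B u)
        = ∑ p ∈ range (n+1), ∑ q ∈ range (n+1),
            (coeff p A * coeff q B) * (coeff kl.1 (u ^ p) * coeff kl.2 (u ^ q)) := by
    intro kl hkl
    have h1 : kl.1 < n + 1 := by
      have := Finset.HasAntidiagonal.mem_antidiagonal.mp hkl; omega
    have h2 : kl.2 < n + 1 := by
      have := Finset.HasAntidiagonal.mem_antidiagonal.mp hkl; omega
    rw [coeff_comp_ext hu A h1, coeff_comp_ext hu B h2, Finset.sum_mul_sum]
    apply Finset.sum_congr rfl; intro p _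
    apply Finset.sum_congr rfl; intro q _
    ring
  rw [Finset.sum_congr rfl hrhs]
  rw [Finset.sum_comm]
  -- now LHS : ∑ i ∈ range (n+1), coeff i (A*B) * coeff n (u^i)
  have hlhs : ∀ i ∈ range (n+1), coeff i (A * B) * coeff n (u ^ i)
      = ∑ pq ∈ antidiagonal i, coeff pq.1 A * coeff pq.2 B * coeff n (u ^ (pq.1 + pq.2)) := by
    intro i _
    rw [coeff_mul, Finset.sum_mul]
    apply Finset.sum_congr rfl
    intro pq hpq
    rw [Finset.HasAntidiagonal.mem_antidiagonal] at hpq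
    rw [hpq]
  rw [Finset.sum_congr rfl hlhs,
    sum_antidiagonal_swap n (fun p q => coeff p A * coeff q B * coeff n (u ^ (p + q)))
      (by intro p q h; rw [coeff_pow_eq_zero hu h, mul_zero])]
  apply Finset.sum_congr rfl; intro p _
  conv_rhs => rw [Finset.sum_comm]
  apply Finset.sum_congr rfl; intro q _
  rw [pow_add, coeff_mul, Finset.mul_sum]

lemma comp_one (u : PowerSeries K) : seriesComp 1 u = 1 := by
  ext n
  rw [coeff_comp, Finset.sum_eq_single 0]
  · simp
  · intro i _ hi
    rw [PowerSeries.coeff_one, if_neg hi, zero_mul]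
  · simp

lemma comp_X_left {u : PowerSeries K} (hu : constantCoeff u = 0) : seriesComp X u = u := by
  ext n
  rw [coeff_comp]
  rcases Nat.eq_zero_or_pos n with h | h
  · subst h; simp [hu]
  · rw [Finset.sum_eq_single 1]
    · simp
    · intro i _ hi
      rw [PowerSeries.coeff_X, if_neg hi, zero_mul]
    · intro h'; simp at h'; omega

lemma comp_X_right (A : PowerSeries K) : seriesComp A X = A := by
  ext n
  rw [coeff_comp, Finset.sum_eq_single n]
  · rw [← pow_one (X : PowerSeries K), ← pow_mul, one_mul, PowerSeries.coeff_X_pow,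
      if_pos rfl, mul_one]
  · intro i _ hi
    rw [← pow_one (X : PowerSeries K), ← pow_mul, one_mul, PowerSeries.coeff_X_pow,
      if_neg (by omega), mul_zero]
  · simp

lemma comp_pow {u : PowerSeries K} (hu : constantCoeff u = 0) (v : PowerSeries K) (i : ℕ) :
    seriesComp (v ^ i) u = (seriesComp v u) ^ i := by
  induction i with
  | zero => simpa using comp_one u
  | succ i ih => rw [pow_succ, comp_mul hu, ih, pow_succ]

lemma constantCoeff_comp {u : PowerSeries K} (hu : constantCoeff u = 0) (A : PowerSeries K) :
    constantCoeff (seriesComp A u) = constantCoeff A := by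
  have := coeff_comp A u 0
  simpa using this

lemma comp_assoc {u v : PowerSeries K} (hu : constantCoeff u = 0)
    (hv : constantCoeff v = 0) (A : PowerSeries K) :
    seriesComp (seriesComp A v) u = seriesComp A (seriesComp v u) := by
  have hvu : constantCoeff (seriesComp v u) = 0 := by
    rw [constantCoeff_comp hu, hv]
  ext n
  rw [coeff_comp, coeff_comp]
  have h1 : ∀ j ∈ range (n+1), coeff j (seriesComp A v) * coeff n (u ^ j)
      = ∑ i ∈ range (n+1), coeff i A * coeff j (v ^ i) * coeff n (u ^ j) := by
    intro j hj
    rw [Finset.mem_range] at hj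
    rw [coeff_comp_ext hv A (by omega : j < n + 1), Finset.sum_mul]
  rw [Finset.sum_congr rfl h1, Finset.sum_comm]
  apply Finset.sum_congr rfl
  intro i _
  have : ∑ j ∈ range (n+1), coeff i A * coeff j (v ^ i) * coeff n (u ^ j)
      = coeff i A * ∑ j ∈ range (n+1), coeff j (v ^ i) * coeff n (u ^ j) := by
    rw [Finset.mul_sum]; apply Finset.sum_congr rfl; intro j _; ring
  rw [this, ← coeff_comp_ext hu (v ^ i) (Nat.lt_succ_self n), comp_pow hu]


noncomputable def invCoeff (φ : PowerSeries K) : ℕ → K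
  | n => (if n = 1 then 1 else 0)
      - ∑ i ∈ (Finset.range n).attach, invCoeff φ i.1 * coeff n (φ ^ (i.1 : ℕ))
  decreasing_by exact Finset.mem_range.mp i.2

lemma invCoeff_eq (φ : PowerSeries K) (n : ℕ) :
    invCoeff φ n = (if n = 1 then 1 else 0)
      - ∑ i ∈ Finset.range n, invCoeff φ i * coeff n (φ ^ i) := by
  rw [invCoeff]
  congr 1
  exact Finset.sum_attach (Finset.range n) (fun i => invCoeff φ i * coeff n (φ ^ i))

noncomputable def invSeries (φ : PowerSeries K) : PowerSeries K :=
  PowerSeries.mk (invCoeff φ)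

lemma invCoeff_zero (φ : PowerSeries K) : invCoeff φ 0 = 0 := by
  rw [invCoeff_eq]; simp

lemma constantCoeff_invSeries (φ : PowerSeries K) : constantCoeff (invSeries φ) = 0 := by
  rw [← coeff_zero_eq_constantCoeff, invSeries, coeff_mk, invCoeff_zero]

lemma invSeries_comp (φ : PowerSeries K) (h0 : constantCoeff φ = 0)
    (h1 : coeff 1 φ = 1) : seriesComp (invSeries φ) φ = X := by
  ext n
  rw [coeff_comp, Finset.sum_range_succ]
  have hd : coeff n (φ ^ n) = 1 := by rw [coeff_self_pow h0, h1, one_pow]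
  have hc : ∀ i, coeff i (invSeries φ) = invCoeff φ i := fun i => coeff_mk i _
  simp only [hc]
  rw [hd, mul_one, invCoeff_eq φ n, PowerSeries.coeff_X]
  ring

lemma coeff_one_invSeries (φ : PowerSeries K) : coeff 1 (invSeries φ) = 1 := by
  rw [invSeries, coeff_mk, invCoeff_eq]
  simp [invCoeff_zero]


section CharZeroPart
variable [CharZero K]

lemma coeff_oneSubPow (a : K) (r : ℕ) :
    coeff r (oneSubPow a) = ((-1 : K) ^ r * ∏ j ∈ Finset.range r, (a - j)) / (r.factorial : K) := by
  simp [oneSubPow]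

lemma descPoch_eval_prod (a : K) (r : ℕ) :
    (descPochhammer K r).eval a = ∏ j ∈ Finset.range r, (a - j) := by
  induction r with
  | zero => simp
  | succ r ih => rw [descPochhammer_succ_eval, ih, Finset.prod_range_succ]

lemma smeval_descPoch (a : K) (r : ℕ) :
    (descPochhammer ℤ r).smeval a = ∏ j ∈ Finset.range r, (a - j) := by
  rw [← Polynomial.eval₂_smulOneHom_eq_smeval ℤ]
  have h : (RingHom.smulOneHom : ℤ →+* K) = Int.castRingHom K :=
    Subsingleton.elim _ _
  rw [h, Polynomial.eval₂_eq_eval_map, descPochhammer_map (Int.castRingHom K) r,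
    descPoch_eval_prod]

lemma ring_choose_eq (a : K) (r : ℕ) :
    Ring.choose a r = (∏ j ∈ Finset.range r, (a - j)) / (r.factorial : K) := by
  have h := Ring.descPochhammer_eq_factorial_smul_choose a r
  rw [smeval_descPoch] at h
  rw [eq_div_iff (Nat.cast_ne_zero.mpr r.factorial_ne_zero : (r.factorial : K) ≠ 0), h,
    nsmul_eq_mul]
  ring

lemma coeff_oneSubPow_choose (a : K) (r : ℕ) :
    coeff r (oneSubPow a) = (-1 : K) ^ r * Ring.choose a r := by
  rw [coeff_oneSubPow, ring_choose_eq, mul_div_assoc]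

lemma oneSubPow_mul (a b : K) : oneSubPow a * oneSubPow b = oneSubPow (a + b) := by
  ext r
  rw [coeff_mul, coeff_oneSubPow_choose, Ring.add_choose_eq r (Commute.all a b),
    Finset.mul_sum, Finset.sum_congr rfl]
  intro ij hij
  rw [Finset.HasAntidiagonal.mem_antidiagonal] at hij
  rw [coeff_oneSubPow_choose, coeff_oneSubPow_choose, ← hij, pow_add]
  ring

lemma oneSubPow_zero : oneSubPow (0 : K) = 1 := by
  ext r
  rw [coeff_oneSubPow]
  cases r with
  | zero => simp
  | succ r =>
    rw [Finset.prod_eq_zero (Finset.mem_range.mpr (Nat.succ_pos r)) (by simp)]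
    simp [PowerSeries.coeff_one]

lemma oneSubPow_one : oneSubPow (1 : K) = 1 - X := by
  ext r
  rw [coeff_oneSubPow]
  match r with
  | 0 => simp
  | 1 => simp [PowerSeries.coeff_one]
  | (r+2) =>
    rw [Finset.prod_eq_zero (Finset.mem_range.mpr (by omega : 1 < r + 2)) (by simp)]
    simp [PowerSeries.coeff_one, PowerSeries.coeff_X]

lemma constantCoeff_oneSubPow (a : K) : constantCoeff (oneSubPow a) = 1 := by
  rw [← coeff_zero_eq_constantCoeff, coeff_oneSubPow]
  simp

lemma derivativeFun_oneSubPow (a : K) :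
    (oneSubPow a).derivativeFun = PowerSeries.C (-a) * oneSubPow (a - 1) := by
  ext r
  rw [show (oneSubPow a).derivativeFun = PowerSeries.derivative K (oneSubPow a) from rfl,
    PowerSeries.coeff_derivative, PowerSeries.coeff_C_mul, coeff_oneSubPow,
    coeff_oneSubPow]
  have hpeel : ∏ j ∈ Finset.range (r+1), (a - j) = (∏ j ∈ Finset.range r, (a - 1 - j)) * a := by
    rw [Finset.prod_range_succ']
    simp only [Nat.cast_add, Nat.cast_one]
    rw [Nat.cast_zero, sub_zero]
    congr 1
    apply Finset.prod_congr rfl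
    intro j _
    ring
  rw [hpeel]
  have h1 : ((r+1).factorial : K) = (r+1) * (r.factorial : K) := by
    rw [Nat.factorial_succ]; push_cast; ring
  have h2 : ((r:K) + 1) ≠ 0 := by
    have := Nat.cast_add_one_ne_zero (R := K) r
    simpa using this
  have h3 : (r.factorial : K) ≠ 0 := Nat.cast_ne_zero.mpr r.factorial_ne_zero
  rw [h1]; field_simp
  ring


variable (τ : K)

noncomputable def phi (τ : K) : PowerSeries K := X * oneSubPow τ

lemma constantCoeff_phi : constantCoeff (phi τ) = 0 := by
  simp [phi]

lemma coeff_one_phi : coeff 1 (phi τ) = 1 := by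
  rw [phi, coeff_succ_X_mul 0, coeff_zero_eq_constantCoeff, constantCoeff_oneSubPow]

lemma phi_pow (n : ℕ) : phi τ ^ n = X ^ n * oneSubPow ((n : K) * τ) := by
  induction n with
  | zero => simp [oneSubPow_zero]
  | succ n ih =>
    rw [pow_succ, ih, phi, pow_succ]
    rw [show X ^ n * oneSubPow ((n : K) * τ) * (X * oneSubPow τ)
        = X ^ n * X * (oneSubPow ((n : K) * τ) * oneSubPow τ) by ring,
      oneSubPow_mul]
    congr 2
    push_cast
    ring

lemma deriv_phi : d⁄dX K (phi τ) = oneSubPow (τ - 1) * (1 - PowerSeries.C (1 + τ) * X) := by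
  rw [phi, Derivation.leibniz]
  rw [show d⁄dX K (X : PowerSeries K) = 1 from PowerSeries.derivative_X]
  have hd : d⁄dX K (oneSubPow τ) = PowerSeries.C (-τ) * oneSubPow (τ - 1) :=
    derivativeFun_oneSubPow τ
  rw [hd]
  have hτ : oneSubPow τ = oneSubPow (τ - 1) * oneSubPow 1 := by
    rw [oneSubPow_mul]; ring_nf
  rw [smul_eq_mul, smul_eq_mul, hτ, oneSubPow_one]
  rw [map_add, map_one, map_neg]
  ring

/-- The key orthogonality computation. -/
lemma key_coeff (m : ℕ) :
    coeff (m + 1) (oneSubPow (-((m : K) + 1) * τ - 1))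
      = (1 + τ) * coeff m (oneSubPow (-((m : K) + 1) * τ - 1)) := by
  have hprod : ∀ r : ℕ, (-1 : K) ^ r * ∏ j ∈ Finset.range r, (-((m : K) + 1) * τ - 1 - j)
      = ∏ j ∈ Finset.range r, (((m : K) + 1) * τ + 1 + j) := by
    intro r
    rw [show ((-1 : K) ^ r) = ∏ _j ∈ Finset.range r, (-1 : K) by
      rw [Finset.prod_const, Finset.card_range], ← Finset.prod_mul_distrib]
    apply Finset.prod_congr rfl
    intro j _
    ring
  rw [coeff_oneSubPow, coeff_oneSubPow, hprod, hprod, Finset.prod_range_succ]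
  have h1 : ((m+1).factorial : K) = ((m : K) + 1) * (m.factorial : K) := by
    rw [Nat.factorial_succ]; push_cast; ring
  have h2 : ((m : K) + 1) ≠ 0 := by
    have := Nat.cast_add_one_ne_zero (R := K) m
    simpa using this
  have h3 : (m.factorial : K) ≠ 0 := Nat.cast_ne_zero.mpr m.factorial_ne_zero
  rw [h1]
  field_simp
  ring

/-- Lemma A: residue orthogonality. -/
lemma lemA {d e : ℕ} (hde : d ≤ e) :
    coeff e (phi τ ^ d * d⁄dX K (phi τ) * oneSubPow (-((e : K) + 1) * τ))
      = if d = e then 1 else 0 := by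
  rw [deriv_phi, phi_pow]
  have hcollapse : X ^ d * oneSubPow ((d : K) * τ) * (oneSubPow (τ - 1)
        * (1 - PowerSeries.C (1 + τ) * X)) * oneSubPow (-((e : K) + 1) * τ)
      = X ^ d * (oneSubPow (-(((e - d : ℕ) : K)) * τ - 1)
        * (1 - PowerSeries.C (1 + τ) * X)) := by
    rw [show X ^ d * oneSubPow ((d : K) * τ) * (oneSubPow (τ - 1)
        * (1 - PowerSeries.C (1 + τ) * X)) * oneSubPow (-((e : K) + 1) * τ)
      = X ^ d * (oneSubPow ((d : K) * τ) * oneSubPow (τ - 1) * oneSubPow (-((e : K) + 1) * τ)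
        * (1 - PowerSeries.C (1 + τ) * X)) by ring, oneSubPow_mul, oneSubPow_mul]
    congr 3
    have : ((e - d : ℕ) : K) = (e : K) - (d : K) := by
      push_cast [hde]; ring
    rw [this]
    ring
  rw [hcollapse, PowerSeries.coeff_X_pow_mul' _ d e, if_pos hde]
  set W := oneSubPow (-(((e - d : ℕ) : K)) * τ - 1) * (1 - PowerSeries.C (1 + τ) * X) with hW
  rcases Nat.eq_or_lt_of_le hde with heq | hlt
  · subst heq
    rw [if_pos rfl, Nat.sub_self, coeff_zero_eq_constantCoeff]
    rw [hW]
    rw [map_mul, constantCoeff_oneSubPow, map_sub, map_one, map_mul]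
    simp
  · rw [if_neg (by omega)]
    obtain ⟨m, hm⟩ : ∃ m, e - d = m + 1 := ⟨e - d - 1, by omega⟩
    rw [hW, hm, mul_sub, mul_one, map_sub]
    rw [show oneSubPow (-(((m + 1 : ℕ) : K)) * τ - 1) * (PowerSeries.C (1 + τ) * X)
        = PowerSeries.C (1 + τ) * (oneSubPow (-(((m + 1 : ℕ) : K)) * τ - 1) * X) by ring]
    rw [PowerSeries.coeff_C_mul, PowerSeries.coeff_succ_mul_X]
    have := key_coeff τ m
    push_cast at this ⊢
    rw [this]
    ring


noncomputable def gSeries (τ : K) : PowerSeries K := invSeries (phi τ)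

lemma gSeries_comp : seriesComp (gSeries τ) (phi τ) = X :=
  invSeries_comp _ (constantCoeff_phi τ) (coeff_one_phi τ)

lemma coeff_pow_deriv (d j : ℕ) :
    ((d : K) + 1) * coeff j (phi τ ^ d * d⁄dX K (phi τ))
      = coeff (j + 1) (phi τ ^ (d + 1)) * ((j : K) + 1) := by
  have h := Derivation.leibniz_pow (d⁄dX K) (phi τ) (d + 1)
  have h2 := congrArg (coeff j) h
  rw [PowerSeries.coeff_derivative, Nat.add_sub_cancel, map_nsmul, smul_eq_mul,
    nsmul_eq_mul] at h2
  push_cast at h2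
  exact h2.symm

noncomputable def Eser (τ : K) (k : ℕ) : PowerSeries K :=
  ∑ d ∈ Finset.range k, PowerSeries.C (((d : K) + 1) * coeff (d + 1) (gSeries τ))
    * (phi τ ^ d * d⁄dX K (phi τ))

lemma coeff_gSeries_zero : coeff 0 (gSeries τ) = 0 := by
  rw [coeff_zero_eq_constantCoeff]
  exact constantCoeff_invSeries _

lemma coeff_E {k j : ℕ} (hj : j < k) :
    coeff j (Eser τ k) = if j = 0 then 1 else 0 := by
  rw [Eser, map_sum]
  have hterm : ∀ d ∈ Finset.range k,
      coeff j (PowerSeries.C (((d : K) + 1) * coeff (d + 1) (gSeries τ))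
          * (phi τ ^ d * d⁄dX K (phi τ)))
        = coeff (d + 1) (gSeries τ) * coeff (j + 1) (phi τ ^ (d + 1)) * ((j : K) + 1) := by
    intro d _
    rw [PowerSeries.coeff_C_mul, mul_assoc, mul_comm ((d : K) + 1), mul_assoc,
      mul_comm ((coeff j) (phi τ ^ d * d⁄dX K (phi τ))) ((d : K) + 1), coeff_pow_deriv τ d j]
    ring
  rw [Finset.sum_congr rfl hterm]
  have hshrink : ∑ d ∈ Finset.range k,
      coeff (d + 1) (gSeries τ) * coeff (j + 1) (phi τ ^ (d + 1)) * ((j : K) + 1)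
    = ∑ d ∈ Finset.range (j + 1),
      coeff (d + 1) (gSeries τ) * coeff (j + 1) (phi τ ^ (d + 1)) * ((j : K) + 1) := by
    symm
    apply Finset.sum_subset
    · intro x hx
      simp only [Finset.mem_range] at hx ⊢
      omega
    · intro d hd hd2
      simp only [Finset.mem_range] at hd hd2
      rw [coeff_pow_eq_zero (constantCoeff_phi τ) (by omega : j + 1 < d + 1), mul_zero, zero_mul]
  rw [hshrink]
  have hsum : ∑ d ∈ Finset.range (j + 1),
      coeff (d + 1) (gSeries τ) * coeff (j + 1) (phi τ ^ (d + 1))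
        = coeff (j + 1) X := by
    rw [← gSeries_comp τ, coeff_comp]
    conv_rhs => rw [Finset.sum_range_succ']
    rw [coeff_gSeries_zero]
    simp
  rw [← Finset.sum_mul, hsum, PowerSeries.coeff_X]
  rcases Nat.eq_zero_or_pos j with h | h
  · subst h; norm_num
  · rw [if_neg (by omega), if_neg (by omega), zero_mul]

lemma extraction (e : ℕ) :
    ((e : K) + 1) * coeff (e + 1) (gSeries τ)
      = coeff e (oneSubPow (-((e : K) + 1) * τ)) := by
  have hway1 : coeff e (Eser τ (e + 1) * oneSubPow (-((e : K) + 1) * τ))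
      = ((e : K) + 1) * coeff (e + 1) (gSeries τ) := by
    rw [Eser, Finset.sum_mul, map_sum]
    rw [Finset.sum_eq_single e]
    · rw [show PowerSeries.C (((e : K) + 1) * coeff (e + 1) (gSeries τ))
          * (phi τ ^ e * d⁄dX K (phi τ)) * oneSubPow (-((e : K) + 1) * τ)
        = PowerSeries.C (((e : K) + 1) * coeff (e + 1) (gSeries τ))
          * (phi τ ^ e * d⁄dX K (phi τ) * oneSubPow (-((e : K) + 1) * τ)) by ring,
        PowerSeries.coeff_C_mul, lemA τ (le_refl e), if_pos rfl, mul_one]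
    · intro d hd hde
      simp only [Finset.mem_range] at hd
      rw [show PowerSeries.C (((d : K) + 1) * coeff (d + 1) (gSeries τ))
          * (phi τ ^ d * d⁄dX K (phi τ)) * oneSubPow (-((e : K) + 1) * τ)
        = PowerSeries.C (((d : K) + 1) * coeff (d + 1) (gSeries τ))
          * (phi τ ^ d * d⁄dX K (phi τ) * oneSubPow (-((e : K) + 1) * τ)) by ring,
        PowerSeries.coeff_C_mul, lemA τ (by omega : d ≤ e), if_neg hde, mul_zero]
    · intro h
      exact absurd (Finset.mem_range.mpr (Nat.lt_succ_self e)) h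
  have hway2 : coeff e (Eser τ (e + 1) * oneSubPow (-((e : K) + 1) * τ))
      = coeff e (oneSubPow (-((e : K) + 1) * τ)) := by
    rw [coeff_mul, Finset.sum_eq_single (0, e)]
    · rw [coeff_E τ (Nat.succ_pos e), if_pos rfl, one_mul]
    · intro il hil hne
      rw [Finset.HasAntidiagonal.mem_antidiagonal] at hil
      have h1 : il.1 < e + 1 := by omega
      have h10 : il.1 ≠ 0 := by
        intro h0
        apply hne
        have : il.2 = e := by omega
        rw [← h0, ← this]
      rw [coeff_E τ (by omega : il.1 < e + 1), if_neg h10, zero_mul]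
    · intro h
      exact absurd (Finset.HasAntidiagonal.mem_antidiagonal.mpr (by simp)) h
  rw [← hway1, hway2]

lemma coeff_oneSubPow_neg (e : ℕ) :
    coeff e (oneSubPow (-((e : K) + 1) * τ))
      = (∏ j ∈ Finset.range e, (((e : K) + 1) * τ + j)) / (e.factorial : K) := by
  rw [coeff_oneSubPow]
  congr 1
  rw [show ((-1 : K) ^ e) = ∏ _j ∈ Finset.range e, (-1 : K) by
    rw [Finset.prod_const, Finset.card_range], ← Finset.prod_mul_distrib]
  apply Finset.prod_congr rfl
  intro j _
  ring

lemma omega_eq_g : omegaSeries τ = gSeries τ := by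
  ext n
  cases n with
  | zero =>
    rw [coeff_gSeries_zero]
    simp [omegaSeries]
  | succ e =>
    have h2 : ((e : K) + 1) ≠ 0 := by
      have := Nat.cast_add_one_ne_zero (R := K) e
      simpa using this
    have h := extraction τ e
    rw [coeff_oneSubPow_neg] at h
    have hval : coeff (e + 1) (gSeries τ)
        = (∏ j ∈ Finset.range e, (((e : K) + 1) * τ + j)) / (((e : K) + 1) * (e.factorial : K)) := by
      rw [eq_div_iff (mul_ne_zero h2 (Nat.cast_ne_zero.mpr e.factorial_ne_zero))]
      rw [eq_div_iff (Nat.cast_ne_zero.mpr e.factorial_ne_zero : (e.factorial : K) ≠ 0)] at h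
      rw [← h]
      ring
    rw [hval, omegaSeries, coeff_mk, if_neg (Nat.succ_ne_zero e)]
    have hfac : (((e + 1).factorial : K)) = ((e : K) + 1) * (e.factorial : K) := by
      rw [Nat.factorial_succ]; push_cast; ring
    rw [Nat.add_sub_cancel, ← hfac]
    congr 1
    apply Finset.prod_congr rfl
    intro j _
    push_cast
    ring

lemma phi_comp_g : seriesComp (phi τ) (gSeries τ) = X := by
  have hg0 : constantCoeff (gSeries τ) = 0 := constantCoeff_invSeries _
  have hg1 : coeff 1 (gSeries τ) = 1 := coeff_one_invSeries _
  have h2 : seriesComp (invSeries (gSeries τ)) (gSeries τ) = X := invSeries_comp _ hg0 hg1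
  have hassoc := comp_assoc (constantCoeff_phi τ) hg0 (invSeries (gSeries τ))
  rw [gSeries_comp τ, h2, comp_X_left (constantCoeff_phi τ), comp_X_right] at hassoc
  rw [hassoc]
  exact h2

end CharZeroPart

end LagAux

/-- `ω(x)·(1-ω(x))^τ = x`: the explicit series `ω` is the compositional inverse of
`x(1-x)^τ`, where `(1-ω)^τ` is the binomial series evaluated at `ω`. -/
theorem omega_mul_oneSubPow_comp_eq_X [CharZero K] (τ : K) :
    omegaSeries τ * seriesComp (oneSubPow τ) (omegaSeries τ) = PowerSeries.X := by
  rw [LagAux.omega_eq_g τ]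
  have hg0 : constantCoeff (LagAux.gSeries τ) = 0 := LagAux.constantCoeff_invSeries _
  have hmul := LagAux.comp_mul hg0 X (oneSubPow τ)
  rw [LagAux.comp_X_left hg0] at hmul
  rw [← hmul, ← LagAux.phi, LagAux.phi_comp_g τ]
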